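/- The Kreweras complementation map κ on the lattice NC(n) of noncrossing partitions satisfies κ^{2n} = identity. -/

import Mathlib

/-- A partition of `{1,…,n}` (as `Fin n`) is noncrossing if there are no
`a < b < c < d` with `a, c` in one block and `b, d` in a different block. -/
def IsNoncrossing {n : ℕ} (P : Finpartition (Finset.univ : Finset (Fin n))) : Prop :=
  ¬ ∃ a b c d : Fin n, a < b ∧ b < c ∧ c < d ∧
    P.part a = P.part c ∧ P.part b = P.part d ∧ P.part a ≠ P.part b

/-- The set `NC(n)` of noncrossing partitions of `{1,…,n}`. -/
abbrev NCP (n : ℕ) := {P : Finpartition (Finset.univ : Finset (Fin n)) // IsNoncrossing P}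

/-- In the interleaved order `1 < 1' < 2 < 2' < … < n < n'` (element `i` of the
first copy sits at position `2i`, of the second copy at position `2i+1`),
positions `x` and `y` lie in the same block of the union `P ∪ Q`, where `P`
lives on the first copy and `Q` on the second. -/
def JointSame {n : ℕ} (P Q : Finpartition (Finset.univ : Finset (Fin n))) (x y : ℕ) : Prop :=
  ∃ i j : Fin n,
    (x = 2 * i.val ∧ y = 2 * j.val ∧ P.part i = P.part j) ∨
    (x = 2 * i.val + 1 ∧ y = 2 * j.val + 1 ∧ Q.part i = Q.part j)

/-- `P ∪ Q` is a noncrossing partition of the interleaved totally ordered set. -/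
def JointNoncrossing {n : ℕ} (P Q : Finpartition (Finset.univ : Finset (Fin n))) : Prop :=
  ¬ ∃ a b c d : ℕ, a < b ∧ b < c ∧ c < d ∧
    JointSame P Q a c ∧ JointSame P Q b d ∧ ¬ JointSame P Q a b

/-- `k` is the Kreweras complementation map on `NC(n)`: `k P` is the coarsest
noncrossing partition on the second copy of `{1,…,n}` such that `P ∪ k P` is
noncrossing on the interleaved set. -/
def IsKreweras {n : ℕ} (k : NCP n → NCP n) : Prop :=
  ∀ P : NCP n, JointNoncrossing P.1 (k P).1 ∧
    ∀ Q : NCP n, JointNoncrossing P.1 Q.1 → Q.1 ≤ (k P).1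

namespace Krew
open Finset

variable {n : ℕ}

abbrev FP (n : ℕ) := Finpartition (Finset.univ : Finset (Fin n))

lemma self_mem_part (P : FP n) (i : Fin n) : i ∈ P.part i := P.mem_part (mem_univ i)

lemma mem_part_iff {P : FP n} {i j : Fin n} : i ∈ P.part j ↔ P.part i = P.part j :=
  P.mem_part_iff_part_eq_part (mem_univ i) (mem_univ j)

lemma part_eq_of_mem' {P : FP n} {i j : Fin n} (h : i ∈ P.part j) : P.part i = P.part j :=
  mem_part_iff.1 h

lemma mem_of_part_eq {P : FP n} {i j : Fin n} (h : P.part i = P.part j) : i ∈ P.part j :=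
  h ▸ self_mem_part P i

/-- `(i,j]` (ordered version, `i ≤ j`) is a union of blocks of `P`. -/
def relO (P : FP n) (i j : Fin n) : Prop :=
  ∀ k m : Fin n, i < k → k ≤ j → m ∈ P.part k → i < m ∧ m ≤ j

/-- symmetric version -/
def rel (P : FP n) (i j : Fin n) : Prop := relO P (min i j) (max i j)

lemma relO_refl (P : FP n) (i : Fin n) : relO P i i := by
  intro k m hk hk' _; exact absurd (lt_of_lt_of_le hk hk') (lt_irrefl i)

lemma rel_refl (P : FP n) (i : Fin n) : rel P i i := by
  simpa [rel] using relO_refl P i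

lemma rel_symm {P : FP n} {i j : Fin n} (h : rel P i j) : rel P j i := by
  simpa [rel, min_comm, max_comm] using h

lemma relO_trans1 {P : FP n} {x y z : Fin n} (hxy : x ≤ y) (hyz : y ≤ z)
    (h1 : relO P x y) (h2 : relO P y z) : relO P x z := by
  intro k m hk hk' hm
  rcases le_or_gt k y with h | h
  · obtain ⟨h3, h4⟩ := h1 k m hk h hm
    exact ⟨h3, le_trans h4 hyz⟩
  · obtain ⟨h3, h4⟩ := h2 k m h hk' hm
    exact ⟨lt_of_le_of_lt hxy h3, h4⟩

lemma relO_trans2 {P : FP n} {x y z : Fin n} (hyz : y ≤ z)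
    (h1 : relO P x z) (h2 : relO P y z) : relO P x y := by
  intro k m hk hk' hm
  obtain ⟨h3, h4⟩ := h1 k m hk (le_trans hk' hyz) hm
  refine ⟨h3, ?_⟩
  by_contra hc
  push_neg at hc
  have := (h2 m k hc h4 (mem_of_part_eq (part_eq_of_mem' hm).symm)).1
  exact absurd hk' (not_le.2 this)

lemma relO_trans3 {P : FP n} {x y z : Fin n} (hxy : x ≤ y)
    (h1 : relO P x z) (h2 : relO P x y) : relO P y z := by
  intro k m hk hk' hm
  obtain ⟨h3, h4⟩ := h1 k m (lt_of_le_of_lt hxy hk) hk' hm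
  refine ⟨?_, h4⟩
  by_contra hc
  push_neg at hc
  have := (h2 m k h3 hc (mem_of_part_eq (part_eq_of_mem' hm).symm)).2
  exact absurd hk (not_lt.2 this)

lemma rel_trans {P : FP n} {a b c : Fin n} (h1 : rel P a b) (h2 : rel P b c) :
    rel P a c := by
  unfold rel at *
  rcases le_total a b with hab | hab <;> rcases le_total b c with hbc | hbc <;>
    rcases le_total a c with hac | hac <;>
    simp_all [min_eq_left, max_eq_right, min_eq_right, max_eq_left]
  · exact relO_trans1 hab hbc h1 h2
  · obtain rfl : a = c := le_antisymm (hab.trans hbc) hac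
    exact relO_refl P a
  · exact relO_trans2 hbc h1 h2
  · exact relO_trans2 hab h2 h1
  · exact relO_trans3 hab h2 h1
  · exact relO_trans3 hbc h1 h2
  · obtain rfl : a = c := le_antisymm hac (hbc.trans hab)
    exact relO_refl P a
  · exact relO_trans1 hbc hab h2 h1

/-- The Kreweras complement relation as a setoid. -/
def kSetoid (P : FP n) : Setoid (Fin n) :=
  ⟨rel P, ⟨rel_refl P, rel_symm, rel_trans⟩⟩

open scoped Classical in
/-- The Kreweras complement of `P`. -/
noncomputable def Kre (P : FP n) : FP n := Finpartition.ofSetoid (kSetoid P)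

lemma mem_part_Kre {P : FP n} {i j : Fin n} : j ∈ (Kre P).part i ↔ rel P i j := by
  classical
  exact Finpartition.mem_part_ofSetoid_iff_rel

lemma part_Kre_eq {P : FP n} {i j : Fin n} :
    (Kre P).part i = (Kre P).part j ↔ rel P i j := by
  constructor
  · intro h
    exact rel_symm (mem_part_Kre.1 (mem_of_part_eq h))
  · intro h
    exact part_eq_of_mem' (mem_part_Kre.2 (rel_symm h))

lemma rel_of_relO {P : FP n} {i j : Fin n} (hij : i ≤ j) (h : relO P i j) : rel P i j := by
  unfold rel
  rwa [min_eq_left hij, max_eq_right hij]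

lemma relO_of_rel {P : FP n} {i j : Fin n} (hij : i ≤ j) (h : rel P i j) : relO P i j := by
  unfold rel at h
  rwa [min_eq_left hij, max_eq_right hij] at h

lemma Kre_noncrossing (P : FP n) : IsNoncrossing (Kre P) := by
  rintro ⟨a, b, c, d, hab, hbc, hcd, h1, h2, h3⟩
  rw [part_Kre_eq] at h1 h2
  apply h3
  rw [part_Kre_eq]
  have hac := relO_of_rel (le_of_lt (hab.trans hbc)) h1
  have hbd := relO_of_rel (le_of_lt (hbc.trans hcd)) h2
  refine rel_of_relO (le_of_lt hab) ?_
  intro k m hk hk' hm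
  have h5 := hac k m hk (hk'.trans (le_of_lt hbc)) hm
  refine ⟨h5.1, ?_⟩
  by_contra hc2
  push_neg at hc2
  have h6 := (hbd m k hc2 (h5.2.trans hcd.le)
    (mem_of_part_eq (part_eq_of_mem' hm).symm)).1
  exact absurd hk' (not_le.2 h6)

lemma not_jointSame_of_parity {P Q : FP n} {x y : ℕ} (h : x % 2 ≠ y % 2) :
    ¬ JointSame P Q x y := by
  rintro ⟨i, j, ⟨rfl, rfl, -⟩ | ⟨rfl, rfl, -⟩⟩ <;> omega

lemma joint_Kre {P : FP n} (hP : IsNoncrossing P) : JointNoncrossing P (Kre P) := by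
  rintro ⟨a, b, c, d, hab, hbc, hcd, hac, hbd, hnab⟩
  obtain ⟨i, j, hij⟩ := hac
  obtain ⟨p, q, hpq⟩ := hbd
  rcases hij with ⟨rfl, rfl, hij⟩ | ⟨rfl, rfl, hij⟩ <;>
    rcases hpq with ⟨rfl, rfl, hpq⟩ | ⟨rfl, rfl, hpq⟩
  · -- all even : crossing in P
    exact hP ⟨i, p, j, q, Fin.lt_def.2 (by omega), Fin.lt_def.2 (by omega),
      Fin.lt_def.2 (by omega), hij, hpq,
      fun h => hnab ⟨i, p, Or.inl ⟨rfl, rfl, h⟩⟩⟩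
  · -- a,c even (P), b,d odd (Kre)
    have hpq' : relO P p q := relO_of_rel (Fin.le_def.2 (by omega)) (part_Kre_eq.1 hpq)
    have := (hpq' j i (Fin.lt_def.2 (by omega)) (Fin.le_def.2 (by omega))
      (mem_of_part_eq hij)).1
    rw [Fin.lt_def] at this; omega
  · -- a,c odd (Kre), b,d even (P)
    have hij' : relO P i j := relO_of_rel (Fin.le_def.2 (by omega)) (part_Kre_eq.1 hij)
    have := (hij' p q (Fin.lt_def.2 (by omega)) (Fin.le_def.2 (by omega))
      (mem_of_part_eq hpq.symm)).2
    rw [Fin.le_def] at this; omega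
  · -- all odd : crossing in Kre P
    exact Kre_noncrossing P ⟨i, p, j, q, Fin.lt_def.2 (by omega), Fin.lt_def.2 (by omega),
      Fin.lt_def.2 (by omega), hij, hpq,
      fun h => hnab ⟨i, p, Or.inr ⟨rfl, rfl, h⟩⟩⟩

lemma le_of_part_imp {P Q : FP n} (h : ∀ i j, P.part i = P.part j → Q.part i = Q.part j) :
    P ≤ Q := by
  intro b hb
  obtain ⟨i, hi⟩ := Finpartition.nonempty_of_mem_parts _ hb
  refine ⟨Q.part i, Q.part_mem.2 (mem_univ i), ?_⟩
  intro x hx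
  have hxi : P.part x = P.part i := by
    rw [P.part_eq_of_mem hb hx, P.part_eq_of_mem hb hi]
  exact mem_of_part_eq (h x i hxi)

lemma relO_of_joint {P Q : FP n} (hJ : JointNoncrossing P Q) {i j : Fin n}
    (hij : i < j) (h : Q.part i = Q.part j) : relO P i j := by
  intro k m hk hk' hm
  rw [Fin.lt_def] at hij hk
  rw [Fin.le_def] at hk'
  constructor
  · rw [Fin.lt_def]
    by_contra hc
    push_neg at hc
    exact hJ ⟨2*m.val, 2*i.val+1, 2*k.val, 2*j.val+1, by omega, by omega, by omega,
      ⟨m, k, Or.inl ⟨rfl, rfl, part_eq_of_mem' hm⟩⟩,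
      ⟨i, j, Or.inr ⟨rfl, rfl, h⟩⟩,
      not_jointSame_of_parity (by omega)⟩
  · rw [Fin.le_def]
    by_contra hc
    push_neg at hc
    exact hJ ⟨2*i.val+1, 2*k.val, 2*j.val+1, 2*m.val, by omega, by omega, by omega,
      ⟨i, j, Or.inr ⟨rfl, rfl, h⟩⟩,
      ⟨k, m, Or.inl ⟨rfl, rfl, (part_eq_of_mem' hm).symm⟩⟩,
      not_jointSame_of_parity (by omega)⟩

lemma le_Kre {P Q : FP n} (hJ : JointNoncrossing P Q) : Q ≤ Kre P := by
  refine le_of_part_imp ?_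
  intro i j h
  rw [part_Kre_eq]
  rcases lt_trichotomy i j with hij | rfl | hij
  · exact rel_of_relO hij.le (relO_of_joint hJ hij h)
  · exact rel_refl P i
  · exact rel_symm (rel_of_relO hij.le (relO_of_joint hJ hij h.symm))

section Shift
variable [NeZero n]

lemma val_succ (i : Fin n) : ((i+1:Fin n)).val = (i.val + 1) % n := by
  rw [Fin.add_def, Fin.val_one']
  show (i.val + 1 % n) % n = (i.val + 1) % n
  rcases Nat.lt_or_ge 1 n with h | h
  · rw [Nat.mod_eq_of_lt h]
  · have hn := Nat.pos_of_ne_zero (NeZero.ne n)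
    have h1 : n = 1 := by omega
    subst h1
    have h0 : i.val = 0 := by omega
    simp [h0]

lemma val_succ_lt {i : Fin n} (h : i.val + 1 < n) : ((i+1:Fin n)).val = i.val + 1 := by
  rw [val_succ, Nat.mod_eq_of_lt h]

lemma val_succ_last {i : Fin n} (h : i.val + 1 = n) : ((i+1:Fin n)).val = 0 := by
  rw [val_succ, h, Nat.mod_self]

/-- Easy direction: the successor-shift relation refines the double Kreweras relation. -/
lemma shift_relO_Kre {P : FP n} {i j : Fin n} (hij : i < j)
    (h : P.part (i+1) = P.part (j+1)) : relO (Kre P) i j := by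
  have hjn := j.isLt
  have hijv := Fin.lt_def.1 hij
  have hi1 : ((i+1 : Fin n)).val = i.val + 1 := val_succ_lt (by omega)
  intro k m hk hk' hm
  have hrel := mem_part_Kre.1 hm
  rw [Fin.lt_def] at hk; rw [Fin.le_def] at hk'
  constructor
  · rw [Fin.lt_def]
    by_contra hc
    push_neg at hc
    have hmk : relO P m k := relO_of_rel (Fin.le_def.2 (by omega)) (rel_symm hrel)
    have hres := hmk (i+1) (j+1) (Fin.lt_def.2 (by rw [hi1]; omega))
      (Fin.le_def.2 (by rw [hi1]; omega)) (mem_of_part_eq h.symm)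
    rcases Nat.lt_or_ge (j.val+1) n with hj | hj
    · have hj1 : ((j+1:Fin n)).val = j.val + 1 := val_succ_lt hj
      have := Fin.le_def.1 hres.2
      omega
    · have hj1 : ((j+1:Fin n)).val = 0 := val_succ_last (by omega)
      have := Fin.lt_def.1 hres.1
      omega
  · rw [Fin.le_def]
    by_contra hc
    push_neg at hc
    have hj1 : ((j+1:Fin n)).val = j.val + 1 := val_succ_lt (by have := m.isLt; omega)
    have hkm : relO P k m := relO_of_rel (Fin.le_def.2 (by omega)) hrel
    have hres := hkm (j+1) (i+1) (Fin.lt_def.2 (by rw [hj1]; omega))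
      (Fin.le_def.2 (by rw [hj1]; omega)) (mem_of_part_eq h)
    have := Fin.lt_def.1 hres.1
    rw [hi1] at this
    omega

set_option maxHeartbeats 1000000 in
/-- Key step: if `(c,j]` is a union of `P`-blocks, `c` is the minimum and `j` the
maximum of the `Kre P`-class of `j`, then `c` lies in the block of `j+1`. -/
lemma claimA {P : FP n} (hP : IsNoncrossing P) {c j : Fin n}
    (hcj : c ≤ j)
    (hcj_rel : relO P c j)
    (hmin : ∀ m : Fin n, rel P j m → c ≤ m)
    (hmax : ∀ m : Fin n, rel P j m → m ≤ j) :
    P.part c = P.part (j+1) := by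
  classical
  by_contra hne
  have hD : c ∉ P.part (j+1) := fun hc => hne (part_eq_of_mem' hc)
  have hjn := j.isLt
  -- elements of A = P.part c are outside (c, j]
  have hAdisj : ∀ a : Fin n, a ∈ P.part c → ¬(c < a ∧ a ≤ j) := by
    rintro a ha ⟨h1, h2⟩
    have := (hcj_rel a c h1 h2 (mem_of_part_eq (part_eq_of_mem' ha).symm)).1
    exact lt_irrefl c this
  rcases Nat.lt_or_ge (j.val + 1) n with hlast | hlast
  · -- j is not the last element
    have hjj : ((j+1 : Fin n)).val = j.val + 1 := val_succ_lt hlast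
    by_cases hE : ∃ a ∈ P.part c, j < a
    · -- the block of c has an element above j
      have hSnonempty : ((P.part c).filter (fun y => j < y)).Nonempty := by
        obtain ⟨a, ha, hja⟩ := hE
        exact ⟨a, mem_filter.2 ⟨ha, hja⟩⟩
      set e := ((P.part c).filter (fun y => j < y)).min' hSnonempty with he_def
      have heS := Finset.min'_mem _ hSnonempty
      rw [← he_def] at heS
      have heA : e ∈ P.part c := (mem_filter.1 heS).1
      have hje : j < e := (mem_filter.1 heS).2
      have hemin : ∀ a ∈ P.part c, j < a → e ≤ a := by
        intro a ha hja
        exact Finset.min'_le ((P.part c).filter (fun y => j < y)) a (mem_filter.2 ⟨ha, hja⟩)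
      have hjev := Fin.lt_def.1 hje
      have hne2 : j.val + 1 < e.val := by
        rcases Nat.lt_or_ge (j.val + 1) e.val with h | h
        · exact h
        · exfalso
          have : e = j + 1 := Fin.ext (by omega)
          rw [this] at heA
          exact hD (mem_of_part_eq (part_eq_of_mem' heA).symm)
      set e' : Fin n := ⟨e.val - 1, by omega⟩ with he'_def
      have hrelce' : relO P c e' := by
        intro k m hk hk' hm
        have hkv := Fin.lt_def.1 hk
        have hkv' := Fin.le_def.1 hk'
        have he'v : e'.val = e.val - 1 := rfl
        rcases le_or_gt k.val j.val with hkj | hkj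
        · have := hcj_rel k m hk (Fin.le_def.2 hkj) hm
          refine ⟨this.1, Fin.le_def.2 ?_⟩
          have := Fin.le_def.1 this.2
          omega
        · have hkA : k ∉ P.part c := by
            intro hkA
            have := Fin.le_def.1 (hemin k hkA (Fin.lt_def.2 hkj))
            omega
          have hBA : P.part k ≠ P.part c := fun h => hkA (mem_of_part_eq h)
          have hmk := part_eq_of_mem' hm
          have hce := (part_eq_of_mem' heA).symm
          constructor
          · rw [Fin.lt_def]
            by_contra hc2
            push_neg at hc2
            rcases Nat.lt_or_ge m.val c.val with hmc | hmc
            · exact hP ⟨m, c, k, e, Fin.lt_def.2 hmc, hk, Fin.lt_def.2 (by omega),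
                hmk, hce, fun h => hBA (hmk ▸ h)⟩
            · have : m = c := Fin.ext (by omega)
              rw [this] at hmk
              exact hBA hmk.symm
          · rw [Fin.le_def]
            by_contra hc2
            push_neg at hc2
            rcases Nat.lt_or_ge e.val m.val with hem | hem
            · exact hP ⟨c, k, e, m, hk, Fin.lt_def.2 (by omega), Fin.lt_def.2 hem,
                hce, hmk.symm, fun h => hBA (h.symm)⟩
            · have : m = e := Fin.ext (by omega)
              rw [this] at hmk
              exact hBA (hmk.symm.trans (hce.symm))
      have : e' ≤ j := hmax e' (rel_trans (rel_symm (rel_of_relO hcj hcj_rel))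
        (rel_of_relO (Fin.le_def.2 (by show c.val ≤ e.val - 1; omega)) hrelce'))
      have := Fin.le_def.1 this
      show False
      have : e'.val = e.val - 1 := rfl
      omega
    · -- the block of c lies entirely in [0, c]
      push_neg at hE
      have hDdisj : ∀ x : Fin n, x ∈ P.part (j+1) → ¬(c < x ∧ x ≤ j) := by
        rintro x hx ⟨h1, h2⟩
        have := (hcj_rel x (j+1) h1 h2 (mem_of_part_eq (part_eq_of_mem' hx).symm)).2
        have := Fin.le_def.1 this
        omega
      by_cases hF : ∃ x ∈ P.part (j+1), x ≤ c
      · -- D has an element below c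
        have hSnonempty : ((P.part (j+1)).filter (fun y => y ≤ c)).Nonempty := by
          obtain ⟨x, hx, hxc⟩ := hF
          exact ⟨x, mem_filter.2 ⟨hx, hxc⟩⟩
        set d' := ((P.part (j+1)).filter (fun y => y ≤ c)).max' hSnonempty with hd'_def
        have hd'S := Finset.max'_mem _ hSnonempty
        rw [← hd'_def] at hd'S
        have hd'D : d' ∈ P.part (j+1) := (mem_filter.1 hd'S).1
        have hd'c : d' ≤ c := (mem_filter.1 hd'S).2
        have hd'max : ∀ x ∈ P.part (j+1), x ≤ c → x ≤ d' := by
          intro x hx hxc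
          exact Finset.le_max' ((P.part (j+1)).filter (fun y => y ≤ c)) x (mem_filter.2 ⟨hx, hxc⟩)
        have hd'c' : d'.val < c.val := by
          rcases Nat.lt_or_ge d'.val c.val with h | h
          · exact h
          · exfalso
            have : d' = c := Fin.ext (le_antisymm (Fin.le_def.1 hd'c) h)
            rw [this] at hd'D
            exact hD hd'D
        have hDd' := part_eq_of_mem' hd'D   -- P.part d' = P.part (j+1)
        have hreld'j : relO P d' j := by
          intro k m hk hk' hm
          have hkv := Fin.lt_def.1 hk
          have hkv' := Fin.le_def.1 hk'
          rcases Nat.lt_or_ge c.val k.val with hck | hck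
          · have := hcj_rel k m (Fin.lt_def.2 hck) hk' hm
            exact ⟨Fin.lt_def.2 (by have := Fin.lt_def.1 this.1; omega), this.2⟩
          · have hkD : k ∉ P.part (j+1) := by
              intro hkD
              have := Fin.le_def.1 (hd'max k hkD (Fin.le_def.2 hck))
              omega
            have hBD : P.part k ≠ P.part (j+1) := fun h => hkD (mem_of_part_eq h)
            have hmk := part_eq_of_mem' hm
            constructor
            · rw [Fin.lt_def]
              by_contra hc2
              push_neg at hc2
              rcases Nat.lt_or_ge m.val d'.val with hmd | hmd
              · exact hP ⟨m, d', k, j+1, Fin.lt_def.2 hmd, Fin.lt_def.2 (by omega),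
                  Fin.lt_def.2 (by omega), hmk, hDd', fun h => hBD (hmk ▸ h ▸ hDd')⟩
              · have : m = d' := Fin.ext (by omega)
                rw [this] at hmk
                exact hBD (hmk.symm.trans hDd')
            · rw [Fin.le_def]
              by_contra hc2
              push_neg at hc2
              rcases Nat.lt_or_ge (j.val+1) m.val with hjm | hjm
              · exact hP ⟨d', k, j+1, m, hk, Fin.lt_def.2 (by omega),
                  Fin.lt_def.2 (by omega), hDd', hmk.symm,
                  fun h => hBD (h.symm.trans hDd')⟩
              · have : m = j + 1 := Fin.ext (by omega)
                rw [this] at hmk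
                exact hBD hmk.symm
        have : c ≤ d' := hmin d' (rel_symm (rel_of_relO (Fin.le_def.2 (by omega)) hreld'j))
        have := Fin.le_def.1 this
        omega
      · -- D lies entirely above j
        push_neg at hF
        have hDup : ∀ x : Fin n, x ∈ P.part (j+1) → j < x := by
          intro x hx
          rcases Nat.lt_or_ge j.val x.val with h | h
          · exact Fin.lt_def.2 h
          · exfalso
            rcases Nat.lt_or_ge c.val x.val with h2 | h2
            · exact hDdisj x hx ⟨Fin.lt_def.2 h2, Fin.le_def.2 h⟩
            · exact absurd (Fin.le_def.2 h2) (not_le.2 (hF x hx))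
        have hSnonempty : (P.part (j+1)).Nonempty := ⟨j+1, self_mem_part P (j+1)⟩
        set e := (P.part (j+1)).max' hSnonempty with he_def
        have heD : e ∈ P.part (j+1) := Finset.max'_mem _ hSnonempty
        have hemax : ∀ x ∈ P.part (j+1), x ≤ e := by
          intro x hx
          exact Finset.le_max' _ x hx
        have hje : j < e := hDup e heD
        have hjev := Fin.lt_def.1 hje
        have hDe := part_eq_of_mem' heD   -- P.part e = P.part (j+1)
        have hreljee : relO P j e := by
          intro k m hk hk' hm
          have hkv := Fin.lt_def.1 hk
          have hkv' := Fin.le_def.1 hk'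
          by_cases hkD : k ∈ P.part (j+1)
          · have hmD : m ∈ P.part (j+1) := by
              rw [← part_eq_of_mem' hkD]; exact hm
            exact ⟨hDup m hmD, hemax m hmD⟩
          · have hBD : P.part k ≠ P.part (j+1) := fun h => hkD (mem_of_part_eq h)
            have hmk := part_eq_of_mem' hm
            have hkj1 : j.val + 1 < k.val := by
              rcases Nat.lt_or_ge (j.val+1) k.val with h | h
              · exact h
              · exfalso
                have : k = j + 1 := Fin.ext (by omega)
                rw [this] at hkD
                exact hkD (self_mem_part P (j+1))
            have hke : k.val < e.val := by
              rcases Nat.lt_or_ge k.val e.val with h | h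
              · exact h
              · exfalso
                have : k = e := Fin.ext (by omega)
                rw [this] at hkD
                exact hkD heD
            constructor
            · rw [Fin.lt_def]
              by_contra hc2
              push_neg at hc2
              exact hP ⟨m, j+1, k, e, Fin.lt_def.2 (by omega), Fin.lt_def.2 (by omega),
                Fin.lt_def.2 hke, hmk, hDe.symm, fun h => hBD (hmk.symm.trans h)⟩
            · rw [Fin.le_def]
              by_contra hc2
              push_neg at hc2
              exact hP ⟨j+1, k, e, m, Fin.lt_def.2 (by omega), Fin.lt_def.2 hke,
                Fin.lt_def.2 hc2, hDe.symm, hmk.symm, fun h => hBD h.symm⟩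
        have : e ≤ j := hmax e (rel_of_relO hje.le hreljee)
        have := Fin.le_def.1 this
        omega
  · -- j is the last element, j + 1 = 0
    have hjj : ((j+1 : Fin n)).val = 0 := val_succ_last (by omega)
    have hjtop : j.val = n - 1 := by omega
    have hDdown : ∀ x : Fin n, x ∈ P.part (j+1) → x.val ≤ c.val := by
      intro x hx
      rcases Nat.lt_or_ge c.val x.val with h | h
      · exfalso
        have := (hcj_rel x (j+1) (Fin.lt_def.2 h)
          (Fin.le_def.2 (by have := x.isLt; omega))
          (mem_of_part_eq (part_eq_of_mem' hx).symm)).1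
        have := Fin.lt_def.1 this
        omega
      · exact h
    have hSnonempty : (P.part (j+1)).Nonempty := ⟨j+1, self_mem_part P (j+1)⟩
    set d' := (P.part (j+1)).max' hSnonempty with hd'_def
    have hd'D : d' ∈ P.part (j+1) := Finset.max'_mem _ hSnonempty
    have hd'max : ∀ x ∈ P.part (j+1), x ≤ d' := by
      intro x hx
      exact Finset.le_max' _ x hx
    have hd'c : d'.val < c.val := by
      have h1 := hDdown d' hd'D
      rcases Nat.lt_or_ge d'.val c.val with h | h
      · exact h
      · exfalso
        have : d' = c := Fin.ext (by omega)
        rw [this] at hd'D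
        exact hD hd'D
    have hDd' := part_eq_of_mem' hd'D
    have hreld'j : relO P d' j := by
      intro k m hk hk' hm
      have hkv := Fin.lt_def.1 hk
      have hkv' := Fin.le_def.1 hk'
      refine ⟨?_, Fin.le_def.2 (by have := m.isLt; omega)⟩
      rcases Nat.lt_or_ge c.val k.val with hck | hck
      · have := (hcj_rel k m (Fin.lt_def.2 hck) hk' hm).1
        exact Fin.lt_def.2 (by have := Fin.lt_def.1 this; omega)
      · have hkD : k ∉ P.part (j+1) := by
          intro hkD
          have := Fin.le_def.1 (hd'max k hkD)
          omega
        have hBD : P.part k ≠ P.part (j+1) := fun h => hkD (mem_of_part_eq h)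
        have hmk := part_eq_of_mem' hm
        rw [Fin.lt_def]
        by_contra hc2
        push_neg at hc2
        rcases Nat.lt_or_ge 0 m.val with hm0 | hm0
        · rcases Nat.lt_or_ge m.val d'.val with hmd | hmd
          · exact hP ⟨j+1, m, d', k, Fin.lt_def.2 (by omega), Fin.lt_def.2 hmd,
              Fin.lt_def.2 (by omega), hDd'.symm, hmk, fun h => hBD (hmk.symm.trans h.symm)⟩
          · have : m = d' := Fin.ext (by omega)
            rw [this] at hmk
            exact hBD (hmk.symm.trans hDd')
        · have : m = j + 1 := Fin.ext (by omega)
          rw [this] at hmk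
          exact hBD hmk.symm
    have : c ≤ d' := hmin d' (rel_symm (rel_of_relO (Fin.le_def.2 (by omega)) hreld'j))
    have := Fin.le_def.1 this
    omega

set_option maxHeartbeats 1000000 in
lemma relO_Kre_shift {P : FP n} (hP : IsNoncrossing P) :
    ∀ d : ℕ, ∀ i j : Fin n, i < j → j.val - i.val ≤ d → relO (Kre P) i j →
      P.part (i+1) = P.part (j+1) := by
  classical
  intro d
  induction d with
  | zero =>
    intro i j hij hd _
    exact absurd hd (by have := Fin.lt_def.1 hij; omega)
  | succ d ih =>
    intro i j hij hd hrel
    have hijv := Fin.lt_def.1 hij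
    have hjn := j.isLt
    have hcne : (univ.filter (fun m => rel P j m)).Nonempty :=
      ⟨j, mem_filter.2 ⟨mem_univ j, rel_refl P j⟩⟩
    set c := (univ.filter (fun m => rel P j m)).min' hcne with hc_def
    have hcS := Finset.min'_mem _ hcne
    rw [← hc_def] at hcS
    have crel : rel P j c := (mem_filter.1 hcS).2
    have cmin : ∀ m : Fin n, rel P j m → c ≤ m := fun m hm =>
      Finset.min'_le _ m (mem_filter.2 ⟨mem_univ m, hm⟩)
    have hbound : ∀ m : Fin n, rel P j m → i < m ∧ m ≤ j := fun m hm =>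
      hrel j m hij (le_refl j) (mem_part_Kre.2 hm)
    have hic : i < c := (hbound c crel).1
    have hcjle : c ≤ j := (hbound c crel).2
    have hicv := Fin.lt_def.1 hic
    have hcjv := Fin.le_def.1 hcjle
    have hA : P.part c = P.part (j+1) :=
      claimA hP hcjle (relO_of_rel hcjle (rel_symm crel)) cmin
        (fun m hm => (hbound m hm).2)
    have hi1 : ((i+1 : Fin n)).val = i.val + 1 := val_succ_lt (by omega)
    rcases Nat.lt_or_ge (i.val + 1) c.val with hcc | hcc
    · -- c is strictly above i+1 : recurse
      set c' : Fin n := ⟨c.val - 1, by omega⟩ with hc'_def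
      have hrelO' : relO (Kre P) i c' := by
        intro k m hk hk' hm
        have hc'v : c'.val = c.val - 1 := rfl
        have hkv := Fin.lt_def.1 hk
        have hkv' : k.val ≤ c.val - 1 := Fin.le_def.1 hk'
        have hrelkm : rel P k m := mem_part_Kre.1 hm
        have h1 := hrel k m hk (Fin.le_def.2 (by omega)) hm
        refine ⟨h1.1, ?_⟩
        rw [Fin.le_def]
        by_contra hc2
        push_neg at hc2
        have hmv' := Fin.le_def.1 h1.2
        have hknotC : ¬ rel P j k := by
          intro h
          have := Fin.le_def.1 (cmin k h)
          omega
        have hmj : m.val < j.val := by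
          rcases Nat.lt_or_ge m.val j.val with h | h
          · exact h
          · exfalso
            have : m = j := Fin.ext (by omega)
            rw [this] at hrelkm
            exact hknotC (rel_symm hrelkm)
        have hcm : c.val < m.val := by
          rcases Nat.lt_or_ge c.val m.val with h | h
          · exact h
          · exfalso
            have : m = c := Fin.ext (by omega)
            rw [this] at hrelkm
            exact hknotC (rel_trans crel (rel_symm hrelkm))
        exact Kre_noncrossing P ⟨k, c, m, j, Fin.lt_def.2 (by omega), Fin.lt_def.2 hcm,
          Fin.lt_def.2 hmj, part_Kre_eq.2 hrelkm, part_Kre_eq.2 (rel_symm crel),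
          fun h => hknotC (rel_trans crel (rel_symm (part_Kre_eq.1 h)))⟩
      have hicp : i < c' := Fin.lt_def.2 (by show i.val < c.val - 1; omega)
      have hstep := ih i c' hicp (by have : c'.val = c.val - 1 := rfl; omega) hrelO'
      have hc'c : (c' + 1 : Fin n) = c := Fin.ext (by
        rw [val_succ_lt (by show c'.val + 1 < n; have : c'.val = c.val - 1 := rfl; omega)]
        show c.val - 1 + 1 = c.val
        omega)
      rw [hc'c] at hstep
      exact hstep.trans hA
    · -- c = i+1
      have : c = i + 1 := Fin.ext (by omega)
      rw [← this]
      exact hA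

lemma rel_Kre_iff {P : FP n} (hP : IsNoncrossing P) (i j : Fin n) :
    rel (Kre P) i j ↔ P.part (i+1) = P.part (j+1) := by
  rcases lt_trichotomy i j with h | rfl | h
  · constructor
    · intro hr
      exact relO_Kre_shift hP (j.val - i.val) i j h le_rfl (relO_of_rel h.le hr)
    · intro hr
      exact rel_of_relO h.le (shift_relO_Kre h hr)
  · simp [rel_refl]
  · constructor
    · intro hr
      exact (relO_Kre_shift hP (i.val - j.val) j i h le_rfl
        (relO_of_rel h.le (rel_symm hr))).symm
    · intro hr
      exact rel_symm (rel_of_relO h.le (shift_relO_Kre h hr.symm))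

end Shift

section Final
variable [NeZero n]

lemma eq_of_parts {P Q : FP n} (h : ∀ i, P.part i = Q.part i) : P = Q := by
  ext B
  constructor
  · intro hB
    obtain ⟨x, hx⟩ := Finpartition.nonempty_of_mem_parts _ hB
    have hBx : B = Q.part x := by rw [← h x, P.part_eq_of_mem hB hx]
    rw [hBx]
    exact Q.part_mem.2 (mem_univ x)
  · intro hB
    obtain ⟨x, hx⟩ := Finpartition.nonempty_of_mem_parts _ hB
    have hBx : B = P.part x := by rw [h x, Q.part_eq_of_mem hB hx]
    rw [hBx]
    exact P.part_mem.2 (mem_univ x)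

noncomputable def KN : NCP n → NCP n := fun P => ⟨Kre P.1, Kre_noncrossing P.1⟩

lemma k_eq_KN {k : NCP n → NCP n} (hk : IsKreweras k) : k = KN := by
  funext P
  apply Subtype.ext
  apply le_antisymm
  · exact le_Kre (hk P).1
  · exact (hk P).2 (KN P) (joint_Kre P.2)

lemma KN2_part (P : NCP n) (i j : Fin n) :
    (KN (KN P)).1.part i = (KN (KN P)).1.part j ↔
      P.1.part (i+1) = P.1.part (j+1) := by
  show (Kre (Kre P.1)).part i = (Kre (Kre P.1)).part j ↔ _
  rw [part_Kre_eq]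
  exact rel_Kre_iff P.2 i j

open Fin.NatCast Fin.CommRing in
lemma iter_part : ∀ (m : ℕ) (P : NCP n) (i j : Fin n),
    ((KN^[2*m] P).1.part i = (KN^[2*m] P).1.part j ↔
      P.1.part (i + (m : Fin n)) = P.1.part (j + (m : Fin n))) := by
  intro m
  induction m with
  | zero => intro P i j; simp
  | succ m ih =>
    intro P i j
    have h2 : 2*(m+1) = 2*m + 2 := by omega
    rw [h2, Function.iterate_add_apply]
    have hKN2 : KN^[2] P = KN (KN P) := by
      rw [Function.iterate_succ_apply, Function.iterate_one]
    rw [ih (KN^[2] P) i j, hKN2, KN2_part]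
    have hcast : ((m+1 : ℕ) : Fin n) = (m : Fin n) + 1 := by
      push_cast
      ring
    rw [hcast, ← add_assoc, ← add_assoc]

end Final

end Krew

/-- The Kreweras complementation map `κ` on `NC(n)` satisfies `κ^{2n} = id`. -/
theorem kreweras_iterate_two_n (n : ℕ) (k : NCP n → NCP n) (hk : IsKreweras k)
    (P : NCP n) : k^[2 * n] P = P := by
  rcases n with _ | m
  · rfl
  · haveI : NeZero (m+1) := ⟨m.succ_ne_zero⟩
    rw [Krew.k_eq_KN hk]
    apply Subtype.ext
    apply Krew.eq_of_parts
    intro i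
    ext x
    rw [Krew.mem_part_iff, Krew.mem_part_iff, Krew.iter_part (m+1) P x i,
      Fin.natCast_self, add_zero, add_zero]
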